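/- Let g : [0,∞) × [0,∞) → [0,∞) be symmetric and increasing (x ≤ x' and y ≤ y' imply g(x,y) ≤ g(x',y')). Let D = {k/2^n : n ∈ ℕ, 0 < k ≤ 2^n} be the set of dyadic rationals in (0,1], and let (r_q)_{q ∈ D} be a family in (0,1] with r_1 = 1 such that: (C1) for all q, q' ∈ D, q < q' implies r_q < r_{q'}; and (C2) for all q, q' ∈ D with q + q' ≤ 1, g(r_q, r_{q'}) < r_{q+q'}. Then the function f : [0,∞) → [0,1] defined by f(t) = sup({q ∈ D : r_q < t} ∪ {0}) is a correction function for g; in particular f is continuous, increasing, f(0) = 0, and f(g(a,b)) ≤ f(a) + f(b) for all a, b ≥ 0. -/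

import Mathlib

/-- A pre-metric on a set `G`: nonnegative, reflexive (vanishes exactly on the
diagonal) and symmetric. -/
def IsPreMetric {G : Type*} (h : G → G → ℝ) : Prop :=
  (∀ x y, 0 ≤ h x y) ∧ (∀ x y, h x y = 0 ↔ x = y) ∧ (∀ x y, h x y = h y x)

/-- A pre-metric is locally continuous if for every `ε > 0` there is `δ > 0` such
that `h x y < δ` implies `|h x z - h z y| < ε` for all `x y z`. -/
def IsLocallyContinuous {G : Type*} (h : G → G → ℝ) : Prop :=
  ∀ ε > 0, ∃ δ > 0, ∀ x y z : G, h x y < δ → |h x z - h z y| < ε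

/-- A pre-metric is bounded if it is bounded above by a constant. -/
def IsBoundedPreMetric {G : Type*} (h : G → G → ℝ) : Prop :=
  ∃ C : ℝ, ∀ x y, h x y ≤ C

/-- The triangle deficiency `TD_h(a,b) = sup {h x z : h x y ≤ a, h y z ≤ b}`
(in `ℝ`, `sSup ∅ = 0`). -/
noncomputable def triangleDeficiency {G : Type*} (h : G → G → ℝ) (a b : ℝ) : ℝ :=
  sSup {r : ℝ | ∃ x y z : G, h x y ≤ a ∧ h y z ≤ b ∧ r = h x z}

/-- A TD function: a symmetric increasing nonnegative function
`g : [0,∞) × [0,∞) → [0,∞)` with `g 0 y ≤ y` such that whenever `y < t` there is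
`δ > 0` with `g δ (y + δ) < t`. -/
def IsTDFunction (g : ℝ → ℝ → ℝ) : Prop :=
  (∀ a b, 0 ≤ a → 0 ≤ b → 0 ≤ g a b) ∧
  (∀ a b, 0 ≤ a → 0 ≤ b → g a b = g b a) ∧
  (∀ a a' b b', 0 ≤ a → 0 ≤ b → a ≤ a' → b ≤ b' → g a b ≤ g a' b') ∧
  (∀ y, 0 ≤ y → g 0 y ≤ y) ∧
  (∀ y t, 0 ≤ y → y < t → ∃ δ > 0, g δ (y + δ) < t)

/-- A correction function for `g : [0,∞) × [0,∞) → [0,∞)`: a continuous increasing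
function `f : [0,∞) → [0,∞)` with `f 0 = 0` and `f (g a b) ≤ f a + f b`. -/
def IsCorrectionFunction (f : ℝ → ℝ) (g : ℝ → ℝ → ℝ) : Prop :=
  ContinuousOn f (Set.Ici 0) ∧ MonotoneOn f (Set.Ici 0) ∧ f 0 = 0 ∧
  (∀ a, 0 ≤ a → 0 ≤ f a) ∧
  (∀ a b, 0 ≤ a → 0 ≤ b → f (g a b) ≤ f a + f b)

/-- A metric on a set `G`: a pre-metric satisfying the triangle inequality. -/
def IsMetricFn {G : Type*} (d : G → G → ℝ) : Prop :=
  IsPreMetric d ∧ ∀ x y z : G, d x z ≤ d x y + d y z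

/-- Two pre-metrics are uniformly equivalent if each is uniformly small when the
other is. -/
def UnifEquiv {G : Type*} (h d : G → G → ℝ) : Prop :=
  (∀ ε > 0, ∃ δ > 0, ∀ x y : G, h x y < δ → d x y < ε) ∧
  (∀ ε > 0, ∃ δ > 0, ∀ x y : G, d x y < δ → h x y < ε)

/-- The set of dyadic rationals `k / 2^n` in `(0, 1]`, as real numbers. -/
def dyadicIoc : Set ℝ :=
  {q : ℝ | ∃ n k : ℕ, 0 < k ∧ k ≤ 2 ^ n ∧ q = (k : ℝ) / 2 ^ n}

/-- Given a symmetric increasing `g` and a family `(r_q)` over the dyadics in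
`(0,1]` with `r 1 = 1`, increasing (C1) and subadditive with respect to `g`
(C2), the function `f t = sup ({q ∈ D : r q < t} ∪ {0})` is a correction
function for `g` taking values in `[0,1]`. -/

lemma dyadic_pos_le {q : ℝ} (h : q ∈ dyadicIoc) : 0 < q ∧ q ≤ 1 := by
  obtain ⟨n, k, hk, hk2, rfl⟩ := h
  constructor
  · apply div_pos (by exact_mod_cast hk) (by positivity)
  · rw [div_le_one (by positivity)]
    exact_mod_cast hk2

lemma dyadic_exists (x : ℝ) (hx : 0 ≤ x) (n : ℕ) :
    ∃ k : ℕ, 0 < k ∧ x < (k : ℝ) / 2 ^ n ∧ (k : ℝ) / 2 ^ n ≤ x + 1 / 2 ^ n := by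
  have h2 : (0:ℝ) < 2 ^ n := by positivity
  refine ⟨⌊x * 2 ^ n⌋₊ + 1, Nat.succ_pos _, ?_, ?_⟩
  · rw [lt_div_iff₀ h2]
    push_cast
    exact Nat.lt_floor_add_one (x * 2 ^ n)
  · rw [div_le_iff₀ h2]
    have h1 : (⌊x * 2 ^ n⌋₊ : ℝ) ≤ x * 2 ^ n := Nat.floor_le (by positivity)
    have h3 : (1 / 2 ^ n : ℝ) * 2 ^ n = 1 := by field_simp
    push_cast
    nlinarith

lemma dyadic_dense {x y : ℝ} (hx : 0 ≤ x) (hxy : x < y) (hy : y ≤ 1) :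
    ∃ q ∈ dyadicIoc, x < q ∧ q < y := by
  obtain ⟨n, hn⟩ := exists_pow_lt_of_lt_one (sub_pos.2 hxy) (by norm_num : (1/2 : ℝ) < 1)
  have hn' : (1 : ℝ) / 2 ^ n < y - x := by
    calc (1 : ℝ) / 2 ^ n = (1/2 : ℝ) ^ n := by rw [div_pow]; norm_num
    _ < y - x := hn
  obtain ⟨k, hk, h1, h2⟩ := dyadic_exists x hx n
  have hqy : (k : ℝ) / 2 ^ n < y := lt_of_le_of_lt h2 (by linarith)
  have hk2 : (k : ℝ) < 2 ^ n := by
    rw [← div_lt_one (by positivity : (0:ℝ) < 2 ^ n)]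
    exact lt_of_lt_of_le hqy hy
  have hk2' : k ≤ 2 ^ n := le_of_lt (by exact_mod_cast hk2)
  exact ⟨(k : ℝ) / 2 ^ n, ⟨n, k, hk, hk2', rfl⟩, h1, hqy⟩

theorem dyadic_family_gives_correction
    (g : ℝ → ℝ → ℝ)
    (hsym : ∀ a b, 0 ≤ a → 0 ≤ b → g a b = g b a)
    (hmono : ∀ a a' b b', 0 ≤ a → 0 ≤ b → a ≤ a' → b ≤ b' → g a b ≤ g a' b')
    (r : ℝ → ℝ)
    (hr : ∀ q ∈ dyadicIoc, r q ∈ Set.Ioc (0 : ℝ) 1)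
    (hr1 : r 1 = 1)
    (hC1 : ∀ q ∈ dyadicIoc, ∀ q' ∈ dyadicIoc, q < q' → r q < r q')
    (hC2 : ∀ q ∈ dyadicIoc, ∀ q' ∈ dyadicIoc, q + q' ≤ 1 →
      g (r q) (r q') < r (q + q'))
    (f : ℝ → ℝ)
    (hf : f = fun t => sSup ({q : ℝ | q ∈ dyadicIoc ∧ r q < t} ∪ {0})) :
    IsCorrectionFunction f g ∧ ∀ t, 0 ≤ t → f t ∈ Set.Icc (0 : ℝ) 1 := by

  have hfS : ∀ t, f t = sSup ({q : ℝ | q ∈ dyadicIoc ∧ r q < t} ∪ {0}) := by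
    intro t; rw [hf]
  have hne : ∀ t : ℝ, ({q : ℝ | q ∈ dyadicIoc ∧ r q < t} ∪ {0} : Set ℝ).Nonempty :=
    fun t => ⟨0, Or.inr rfl⟩
  have hbdd : ∀ t : ℝ, BddAbove ({q : ℝ | q ∈ dyadicIoc ∧ r q < t} ∪ {0} : Set ℝ) := by
    intro t
    refine ⟨1, ?_⟩
    rintro q (⟨hqD, _⟩ | rfl)
    · exact (dyadic_pos_le hqD).2
    · norm_num
  have hf0le : ∀ t, 0 ≤ f t := by
    intro t; rw [hfS]
    exact le_csSup (hbdd t) (Or.inr rfl)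
  have hfle1 : ∀ t, f t ≤ 1 := by
    intro t; rw [hfS]
    apply csSup_le (hne t)
    rintro q (⟨hqD, _⟩ | rfl)
    · exact (dyadic_pos_le hqD).2
    · norm_num
  have hmem : ∀ t q, q ∈ dyadicIoc → r q < t → q ≤ f t := by
    intro t q hqD hrq; rw [hfS]
    exact le_csSup (hbdd t) (Or.inl ⟨hqD, hrq⟩)
  have hle : ∀ t q, q ∈ dyadicIoc → f t < q → t ≤ r q := by
    intro t q hqD hlt
    by_contra hcon
    push_neg at hcon
    exact absurd (hmem t q hqD hcon) (not_le.2 hlt)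
  have hub : ∀ s q1, q1 ∈ dyadicIoc → s ≤ r q1 → f s ≤ q1 := by
    intro s q1 hq1D hs
    rw [hfS]
    apply csSup_le (hne s)
    rintro q (⟨hqD, hqr⟩ | rfl)
    · rcases lt_trichotomy q q1 with h | h | h
      · exact h.le
      · subst h; exact absurd (lt_of_lt_of_le hqr hs) (lt_irrefl _)
      · exact absurd (lt_of_lt_of_le hqr hs) (not_lt.2 (hC1 q1 hq1D q hqD h).le)
    · exact (dyadic_pos_le hq1D).1.le
  have hmonoF : ∀ s t : ℝ, s ≤ t → f s ≤ f t := by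
    intro s t hst
    rw [hfS, hfS]
    apply csSup_le_csSup (hbdd t) (hne s)
    rintro q (⟨hqD, hqr⟩ | rfl)
    · exact Or.inl ⟨hqD, lt_of_lt_of_le hqr hst⟩
    · exact Or.inr rfl
  have hfzero : f 0 = 0 := by
    refine le_antisymm ?_ (hf0le 0)
    rw [hfS]
    apply csSup_le (hne 0)
    rintro q (⟨hqD, hqr⟩ | rfl)
    · exact absurd (hr q hqD).1 (not_lt.2 hqr.le)
    · exact le_refl 0
  have hsub : ∀ a b, 0 ≤ a → 0 ≤ b → f (g a b) ≤ f a + f b := by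
    intro a b ha hb
    rw [hfS]
    apply csSup_le (hne _)
    rintro q (⟨hqD, hqr⟩ | rfl)
    · by_contra hcon
      push_neg at hcon
      obtain ⟨hq0, hq1⟩ := dyadic_pos_le hqD
      obtain ⟨M, hM⟩ := exists_pow_lt_of_lt_one
        (by linarith : (0:ℝ) < (q - f a - f b) / 2) (by norm_num : (1/2 : ℝ) < 1)
      have hM' : (1 : ℝ) / 2 ^ M < (q - f a - f b) / 2 := by
        calc (1 : ℝ) / 2 ^ M = (1/2 : ℝ) ^ M := by rw [div_pow]; norm_num
        _ < _ := hM
      obtain ⟨k1, hk1pos, hk1l, hk1r⟩ := dyadic_exists (f a) (hf0le a) M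
      obtain ⟨k2, hk2pos, hk2l, hk2r⟩ := dyadic_exists (f b) (hf0le b) M
      set q1 : ℝ := (k1 : ℝ) / 2 ^ M with hq1def
      set q2 : ℝ := (k2 : ℝ) / 2 ^ M with hq2def
      have hsum : q1 + q2 < q := by linarith
      have hq1pos : 0 < q1 := lt_of_le_of_lt (hf0le a) hk1l
      have hq2pos : 0 < q2 := lt_of_le_of_lt (hf0le b) hk2l
      have hsum1 : q1 + q2 < 1 := lt_of_lt_of_le hsum hq1
      have h2M : (0:ℝ) < 2 ^ M := by positivity
      have hq1D : q1 ∈ dyadicIoc := by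
        refine ⟨M, k1, hk1pos, ?_, rfl⟩
        have : q1 < 1 := by linarith
        rw [div_lt_one h2M] at this
        exact_mod_cast this.le
      have hq2D : q2 ∈ dyadicIoc := by
        refine ⟨M, k2, hk2pos, ?_, rfl⟩
        have : q2 < 1 := by linarith
        rw [div_lt_one h2M] at this
        exact_mod_cast this.le
      have hsumeq : q1 + q2 = ((k1 + k2 : ℕ) : ℝ) / 2 ^ M := by
        rw [hq1def, hq2def, ← add_div]; push_cast; ring
      have hqsD : q1 + q2 ∈ dyadicIoc := by
        refine ⟨M, k1 + k2, by positivity, ?_, hsumeq⟩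
        have : q1 + q2 < 1 := hsum1
        rw [hsumeq, div_lt_one h2M] at this
        exact_mod_cast this.le
      have h1 : a ≤ r q1 := hle a q1 hq1D hk1l
      have h2 : b ≤ r q2 := hle b q2 hq2D hk2l
      have h3 : g a b ≤ g (r q1) (r q2) := hmono a (r q1) b (r q2) ha hb h1 h2
      have h4 : g (r q1) (r q2) < r (q1 + q2) :=
        hC2 q1 hq1D q2 hq2D (le_of_lt hsum1)
      have h5 : r (q1 + q2) < r q := hC1 _ hqsD q hqD hsum
      linarith
    · exact add_nonneg (hf0le a) (hf0le b)
  have hcont : ContinuousOn f (Set.Ici 0) := by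
    intro t ht
    rw [Metric.continuousWithinAt_iff]
    intro ε hε
    obtain ⟨tp, htp, hright⟩ : ∃ tp, t < tp ∧ ∀ s, s ≤ tp → f s < f t + ε := by
      by_cases h1 : 1 < f t + ε
      · exact ⟨t + 1, by linarith, fun s _ => lt_of_le_of_lt (hfle1 s) h1⟩
      · push_neg at h1
        have h2 : f t + ε / 2 ≤ 1 := by linarith
        obtain ⟨q0, hq0D, hq0l, hq0r⟩ :=
          dyadic_dense (hf0le t) (by linarith : f t < f t + ε / 2) h2
        obtain ⟨q1, hq1D, hq1l, hq1r⟩ :=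
          dyadic_dense (dyadic_pos_le hq0D).1.le hq0r h2
        have ht0 : t ≤ r q0 := hle t q0 hq0D hq0l
        have hr01 : r q0 < r q1 := hC1 q0 hq0D q1 hq1D hq1l
        refine ⟨r q1, lt_of_le_of_lt ht0 hr01, fun s hs => ?_⟩
        exact lt_of_le_of_lt (hub s q1 hq1D hs) (by linarith)
    obtain ⟨tm, htm, hleft⟩ : ∃ tm, tm < t ∧ ∀ s, tm < s → 0 ≤ s → f t - ε < f s := by
      by_cases h1 : f t < ε
      · exact ⟨t - 1, by linarith, fun s _ hs => lt_of_lt_of_le (by linarith) (hf0le s)⟩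
      · push_neg at h1
        have hlt : f t - ε / 2 < f t := by linarith
        rw [hfS t] at hlt
        obtain ⟨q, hqS, hq⟩ := exists_lt_of_lt_csSup (hne t) hlt
        rw [← hfS t] at hq
        have hqpos : 0 < q := by linarith
        rcases hqS with ⟨hqD, hqr⟩ | rfl
        · refine ⟨r q, hqr, fun s hs _ => ?_⟩
          have := hmem s q hqD hs
          linarith
        · exact absurd hqpos (lt_irrefl 0)
    refine ⟨min (tp - t) (t - tm), lt_min (by linarith) (by linarith), fun s hs hd => ?_⟩
    rw [Real.dist_eq] at hd ⊢
    rw [abs_lt] at hd ⊢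
    have hd1 : s ≤ tp := by
      have := lt_of_lt_of_le hd.2 (min_le_left _ _); linarith
    have hd2 : tm < s := by
      have h := hd.1
      have h' := min_le_right (tp - t) (t - tm)
      linarith
    have hA := hright s hd1
    have hB := hleft s hd2 hs
    constructor <;> linarith
  refine ⟨⟨hcont, fun a _ b _ hab => hmonoF a b hab, hfzero, fun a _ => hf0le a, hsub⟩,
    fun t _ => ⟨hf0le t, hfle1 t⟩⟩
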